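/- There exist a finite set A of atoms, a ground normal logic program Π over A, a subset L ⊆ A, and an answer set I ∈ AS(Π) such that for the program Π' obtained exactly as the omission program Π_{L̄} except that every constraint ⊥ ← B⁺, not B⁻ whose body mentions an atom of L is replaced by the shrunk constraint ⊥ ← B⁺ \ L, not (B⁻ \ L) (instead of being omitted), there is no answer set I' ∈ AS(Π') with I' ∩ (A \ L) = I \ L. Hence shrinking constraints destroys the over-approximation property of literal omission. -/

import Mathlib

namespace Stmt2

/-- A ground normal logic rule over atoms `α`: head is an atom or `⊥` (`none`),
with finite positive and negative bodies (finiteness assumed where needed). -/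
structure Rule (α : Type*) where
  head : Option α
  pos : Set α
  neg : Set α

/-- `I` satisfies the body of `r`: `B⁺(r) ⊆ I` and `B⁻(r) ∩ I = ∅`. -/
def satBody {α : Type*} (I : Set α) (r : Rule α) : Prop :=
  r.pos ⊆ I ∧ ∀ a ∈ r.neg, a ∉ I

/-- `I` is a model of the program `Pr`: the head of every rule whose body is
satisfied is a (non-`⊥`) atom belonging to `I`. -/
def isModel {α : Type*} (Pr : Set (Rule α)) (I : Set α) : Prop :=
  ∀ r ∈ Pr, satBody I r → ∃ a, r.head = some a ∧ a ∈ I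

/-- FLP-reduct: the rules of `Pr` whose body is satisfied by `I`. -/
def reduct {α : Type*} (Pr : Set (Rule α)) (I : Set α) : Set (Rule α) :=
  {r | r ∈ Pr ∧ satBody I r}

/-- `I` is an answer set of `Pr`: a ⊆-minimal model of the FLP-reduct `fPr^I`. -/
def isAnswerSet {α : Type*} (Pr : Set (Rule α)) (I : Set α) : Prop :=
  isModel (reduct Pr I) I ∧ ∀ J, J ⊆ I → isModel (reduct Pr I) J → J = I

/-- The body of `r` mentions some atom of `L`. -/
def mentions {α : Type*} (r : Rule α) (L : Set α) : Prop :=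
  ∃ a ∈ r.pos ∪ r.neg, a ∈ L

/-- The head of `r` is not an atom of `L` (constraints satisfy this trivially). -/
def headNotIn {α : Type*} (r : Rule α) (L : Set α) : Prop :=
  ∀ a, r.head = some a → a ∉ L

/-- A rule over `α`, viewed as a rule over the extended atom set
`α ⊕ Rule α` (auxiliary atoms are indexed by rules). -/
def liftRule {α : Type*} (r : Rule α) : Rule (α ⊕ Rule α) :=
  ⟨r.head.map Sum.inl, Sum.inl '' r.pos, Sum.inl '' r.neg⟩

/-- First half of the choice rule `0{h(r)}1 ← B⁺(r) \ L, not (B⁻(r) \ L)`: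
`h(r) ← B⁺(r) \ L, not ((B⁻(r) \ L) ∪ {α'_r})`, with fresh atom `α'_r = Sum.inr r`. -/
def choice1 {α : Type*} (r : Rule α) (a : α) (L : Set α) : Rule (α ⊕ Rule α) :=
  ⟨some (Sum.inl a), Sum.inl '' (r.pos \ L), Sum.inl '' (r.neg \ L) ∪ {Sum.inr r}⟩

/-- Second half of the choice rule:
`α'_r ← B⁺(r) \ L, not ((B⁻(r) \ L) ∪ {h(r)})`. -/
def choice2 {α : Type*} (r : Rule α) (a : α) (L : Set α) : Rule (α ⊕ Rule α) :=
  ⟨some (Sum.inr r), Sum.inl '' (r.pos \ L), Sum.inl '' (r.neg \ L) ∪ {Sum.inl a}⟩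

/-- The omission program `Π_{L̄}`: (i) rules with head not in `L` whose body does
not mention `L`, unchanged; (ii) for non-constraint rules with head not in `L`
whose body mentions `L`, the choice rule `0{h(r)}1 ← B⁺(r) \ L, not (B⁻(r) \ L)`
(as its two-rule abbreviation with a fresh auxiliary atom); rules with head in
`L` and constraints mentioning `L` are dropped. -/
def omission {α : Type*} (Pr : Set (Rule α)) (L : Set α) : Set (Rule (α ⊕ Rule α)) :=
  {r' | ∃ r, r ∈ Pr ∧ headNotIn r L ∧ ¬ mentions r L ∧ r' = liftRule r} ∪
  {r' | ∃ r, r ∈ Pr ∧ ∃ a, r.head = some a ∧ a ∉ L ∧ mentions r L ∧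
        (r' = choice1 r a L ∨ r' = choice2 r a L)}

/-- The shrunk constraint `⊥ ← B⁺(r) \ L, not (B⁻(r) \ L)` obtained from a
constraint `r` whose body mentions `L`. -/
def shrunkConstraint {α : Type*} (r : Rule α) (L : Set α) : Rule (α ⊕ Rule α) :=
  ⟨none, Sum.inl '' (r.pos \ L), Sum.inl '' (r.neg \ L)⟩

/-- The variant `Π'` of the omission program in which every constraint whose
body mentions an atom of `L` is replaced by its shrunk version instead of
being omitted. -/
def omissionShrunk {α : Type*} (Pr : Set (Rule α)) (L : Set α) :
    Set (Rule (α ⊕ Rule α)) :=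
  omission Pr L ∪
  {r' | ∃ r, r ∈ Pr ∧ r.head = none ∧ mentions r L ∧ r' = shrunkConstraint r L}

/-- there are a finite set of atoms, a ground normal program `Π`
over them, a subset `L`, and an answer set `I` of `Π` such that no answer set
`I'` of the shrunk-constraint variant `Π'` satisfies `I' ∩ (A \ L) = I \ L`:
shrinking constraints destroys the over-approximation property. -/
theorem shrunk_constraints_not_over_approximation :
    ∃ (n : ℕ) (Pr : Set (Rule (Fin n))) (L I : Set (Fin n)),
      (∀ r ∈ Pr, r.pos.Finite ∧ r.neg.Finite) ∧
      isAnswerSet Pr I ∧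
      ¬ ∃ I' : Set (Fin n ⊕ Rule (Fin n)),
          isAnswerSet (omissionShrunk Pr L) I' ∧
          {a : Fin n | Sum.inl a ∈ I'} \ L = I \ L := by

    refine ⟨1, {⟨some 0, ∅, ∅⟩, ⟨none, ∅, {0}⟩}, Set.univ, Set.univ, ?_, ?_, ?_⟩
    · rintro r (rfl | rfl) <;> simp
    · constructor
      · rintro r ⟨hr | hr, hb⟩ _
        · subst hr; exact ⟨0, rfl, trivial⟩
        · subst hr
          exact absurd trivial (hb.2 0 rfl)
      · intro J hJ hm
        have h1 : (⟨some 0, ∅, ∅⟩ : Rule (Fin 1)) ∈ reduct {⟨some 0, ∅, ∅⟩, ⟨none, ∅, {0}⟩} Set.univ := by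
          refine ⟨Or.inl rfl, ?_, ?_⟩ <;> simp
        obtain ⟨a, ha, haJ⟩ := hm _ h1 ⟨by simp, by simp⟩
        ext x
        simp only [Set.mem_univ, iff_true]
        have : x = a := Subsingleton.elim x a
        exact this ▸ haJ
    · rintro ⟨I', ⟨hmod, -⟩, -⟩
      have hmem : shrunkConstraint (⟨none, ∅, {0}⟩ : Rule (Fin 1)) Set.univ ∈
          omissionShrunk ({⟨some 0, ∅, ∅⟩, ⟨none, ∅, {0}⟩} : Set (Rule (Fin 1))) Set.univ := by
        exact Or.inr ⟨⟨none, ∅, {0}⟩, Or.inr rfl, rfl, ⟨0, Or.inr rfl, trivial⟩, rfl⟩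
      have hb : satBody I' (shrunkConstraint (⟨none, ∅, {0}⟩ : Rule (Fin 1)) Set.univ) := by
        constructor <;> simp [shrunkConstraint]
      obtain ⟨a, ha, -⟩ := hmod _ ⟨hmem, hb⟩ hb
      simp [shrunkConstraint] at ha


end Stmt2
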